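/- Let H be a real Hilbert space, K a closed subspace of H, Π the orthogonal projection of H onto K, and γ ∈ (0,1). Let T : H → H satisfy ‖T(u) − T(w)‖ ≤ √γ·‖u − w‖ for all u, w ∈ H. Suppose V* ∈ H satisfies T(V*) = V*, and Ṽ ∈ K satisfies Π(T(Ṽ)) = Ṽ. Then ‖V* − Ṽ‖ ≤ ‖V* − Π(V*)‖ / √(1 − γ). -/

import Mathlib

open RealInnerProductSpace


/-- Error bound for the projected fixed point: if `T` is `√γ`-Lipschitz on a real
Hilbert space, `V*` is a fixed point of `T`, and `Ṽ ∈ K` is a fixed point of the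
projected operator `Π∘T` (with `Π` the orthogonal projection onto the closed subspace
`K`), then `‖V* − Ṽ‖ ≤ ‖V* − Π V*‖ / √(1 − γ)`. -/
theorem stmt10 {H : Type*} [NormedAddCommGroup H] [InnerProductSpace ℝ H]
    (K : Submodule ℝ H) [CompleteSpace K]
    (γ : ℝ) (hγ : γ ∈ Set.Ioo (0 : ℝ) 1)
    (T : H → H) (hT : ∀ u w, ‖T u - T w‖ ≤ Real.sqrt γ * ‖u - w‖)
    (Vstar : H) (hfix : T Vstar = Vstar)
    (Vt : H) (hVt : Vt ∈ K)
    (hproj : (K.orthogonalProjectionOnto (T Vt) : H) = Vt) :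
    ‖Vstar - Vt‖ ≤ ‖Vstar - (K.orthogonalProjectionOnto Vstar : H)‖ / Real.sqrt (1 - γ) := by
  obtain ⟨hγ0, hγ1⟩ := hγ
  set P := K.orthogonalProjectionOnto
  set a := ‖Vstar - (P Vstar : H)‖
  set b := ‖(P Vstar : H) - Vt‖
  set c := ‖Vstar - Vt‖
  -- Pythagoras
  have horth : ⟪Vstar - (P Vstar : H), (P Vstar : H) - Vt⟫ = 0 := by
    have h1 : Vstar - (P Vstar : H) ∈ Kᗮ := Submodule.sub_starProjection_mem_orthogonal (K := K) Vstar
    have h2 : (P Vstar : H) - Vt ∈ K := K.sub_mem (P Vstar).2 hVt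
    rw [real_inner_comm]; exact h1 _ h2
  have hpyth : c ^ 2 = a ^ 2 + b ^ 2 := by
    have h := norm_add_sq_real (Vstar - (P Vstar : H)) ((P Vstar : H) - Vt)
    rw [show Vstar - (P Vstar : H) + ((P Vstar : H) - Vt) = Vstar - Vt by abel, horth] at h
    linarith
  -- contraction bound on b
  have hb : b ≤ Real.sqrt γ * c := by
    have h1 : (P Vstar : H) = (P (T Vstar) : H) := by rw [hfix]
    have h2 : b = ‖(P (T Vstar) - P (T Vt) : K)‖ := by
      have e : ((P (T Vstar) - P (T Vt) : K) : H) = (P Vstar : H) - Vt := by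
        push_cast [hproj, hfix]
        rfl
      rw [show b = ‖((P (T Vstar) - P (T Vt) : K) : H)‖ from (congrArg norm e).symm,
        ← Submodule.coe_norm]
    rw [h2, ← map_sub]
    calc ‖P (T Vstar - T Vt)‖ ≤ 1 * ‖T Vstar - T Vt‖ :=
          P.le_of_opNorm_le (Submodule.orthogonalProjectionOnto_norm_le K) _
      _ = ‖T Vstar - T Vt‖ := one_mul _
      _ ≤ Real.sqrt γ * c := hT _ _
  have hc0 : (0:ℝ) ≤ c := norm_nonneg _
  have ha0 : (0:ℝ) ≤ a := norm_nonneg _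
  have hb0 : (0:ℝ) ≤ b := norm_nonneg _
  have hγs : Real.sqrt γ ^ 2 = γ := Real.sq_sqrt hγ0.le
  have hkey : c ^ 2 * (1 - γ) ≤ a ^ 2 := by nlinarith
  have hs : 0 < Real.sqrt (1 - γ) := Real.sqrt_pos.mpr (by linarith)
  rw [le_div_iff₀ hs]
  have hsq : (c * Real.sqrt (1 - γ)) ^ 2 ≤ a ^ 2 := by
    rw [mul_pow, Real.sq_sqrt (by linarith : (0:ℝ) ≤ 1 - γ)]; exact hkey
  nlinarith [mul_nonneg hc0 hs.le]
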